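/- Let h ∈ K̄[z] be nonzero with a total part-p-th-power decomposition h = q^p + ρ, meaning ρ consists only of terms whose degree is not divisible by p. Then this decomposition is good: either v(ρ) − v(h) ≥ p·v(p)/(p−1), or no part-p-th-power decomposition h = q₁^p + ρ₁ satisfies v(ρ₁) > v(ρ). -/

import Mathlib

open Polynomial
open scoped Classical

/-- An additive ℚ-valued valuation on a field `K`, recorded as a bare function with
the valuation axioms imposed only at nonzero elements (the value at `0` is junk). -/
structure AddVal (K : Type*) [Field K] where
  v : K → ℚ
  map_one : v 1 = 0
  map_mul : ∀ x y : K, x ≠ 0 → y ≠ 0 → v (x * y) = v x + v y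
  add_ge : ∀ x y : K, x ≠ 0 → y ≠ 0 → x + y ≠ 0 → min (v x) (v y) ≤ v (x + y)

variable {K : Type*} [Field K]

/-- The Gauss valuation of a polynomial: the minimum of the valuations of its
(nonzero) coefficients, with junk value `0` at the zero polynomial. -/
noncomputable def AddVal.gauss (w : AddVal K) (h : K[X]) : ℚ :=
  if hh : h = 0 then 0
  else h.support.inf' (Polynomial.support_nonempty.mpr hh) fun i => w.v (h.coeff i)

/-- Gauss valuation valued in `ℚ ∪ {∞}`, taking the value `⊤` at the zero polynomial. -/
noncomputable def AddVal.gaussT (w : AddVal K) (h : K[X]) : WithTop ℚ :=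
  if h = 0 then ⊤ else (w.gauss h : WithTop ℚ)

/-- The quantity `t = v(ρ) - v(h) ∈ ℚ ∪ {∞}` attached to a
part-`p`-th-power decomposition `h = q^p + ρ` (it is `⊤` when `ρ = 0`). -/
noncomputable def AddVal.tdiff (w : AddVal K) (h ρ : K[X]) : WithTop ℚ :=
  if ρ = 0 then ⊤ else ((w.gauss ρ - w.gauss h : ℚ) : WithTop ℚ)

/-- `h = q ^ p + ρ` is a part-`p`-th-power decomposition (`deg q ≤ ⌊deg h / p⌋`). -/
def IsPartDecomp (p : ℕ) (h q ρ : K[X]) : Prop :=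
  h = q ^ p + ρ ∧ q.natDegree ≤ h.natDegree / p

/-- The threshold `p·v(p)/(p-1)`. -/
noncomputable def pBound (w : AddVal K) (p : ℕ) : ℚ :=
  (p : ℚ) * w.v (p : K) / ((p : ℚ) - 1)

/-- A part-`p`-th-power decomposition is good if `t ≥ p·v(p)/(p-1)` or if no
decomposition achieves a strictly larger value of `t = v(ρ) - v(h)`. -/
def IsGoodDecomp (w : AddVal K) (p : ℕ) (h q ρ : K[X]) : Prop :=
  IsPartDecomp p h q ρ ∧
    (((pBound w p : ℚ) : WithTop ℚ) ≤ w.tdiff h ρ ∨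
      ∀ q₁ ρ₁ : K[X], IsPartDecomp p h q₁ ρ₁ → w.tdiff h ρ₁ ≤ w.tdiff h ρ)
namespace AddVal
variable (w : AddVal K)

lemma v_neg (x : K) : w.v (-x) = w.v x := by
  rcases eq_or_ne x 0 with rfl | hx
  · simp
  · have h1 : w.v (-1 : K) = 0 := by
      have h2 := w.map_mul (-1) (-1) (by norm_num) (by norm_num)
      have h3 : ((-1 : K) * (-1)) = 1 := by ring
      rw [h3, w.map_one] at h2
      linarith
    have h2 := w.map_mul (-1) x (by norm_num) hx
    rw [neg_one_mul] at h2
    rw [h2, h1, zero_add]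

lemma add_bound {B : ℚ} {x y : K} (hx : x = 0 ∨ B ≤ w.v x) (hy : y = 0 ∨ B ≤ w.v y) :
    x + y = 0 ∨ B ≤ w.v (x + y) := by
  by_cases hx0 : x = 0
  · subst hx0; simpa using hy
  by_cases hy0 : y = 0
  · subst hy0; simpa using hx
  by_cases hxy : x + y = 0
  · exact Or.inl hxy
  refine Or.inr ?_
  have := w.add_ge x y hx0 hy0 hxy
  have hbx := hx.resolve_left hx0
  have hby := hy.resolve_left hy0
  exact le_trans (le_min hbx hby) this

lemma add_bound_lt {B : ℚ} {x y : K} (hx : x = 0 ∨ B < w.v x) (hy : y = 0 ∨ B < w.v y) :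
    x + y = 0 ∨ B < w.v (x + y) := by
  by_cases hx0 : x = 0
  · subst hx0; simpa using hy
  by_cases hy0 : y = 0
  · subst hy0; simpa using hx
  by_cases hxy : x + y = 0
  · exact Or.inl hxy
  refine Or.inr ?_
  have := w.add_ge x y hx0 hy0 hxy
  have hbx := hx.resolve_left hx0
  have hby := hy.resolve_left hy0
  exact lt_of_lt_of_le (lt_min hbx hby) this

lemma add_eq_of_lt {x y : K} (hx : x ≠ 0) (hy : y = 0 ∨ w.v x < w.v y) :
    x + y ≠ 0 ∧ w.v (x + y) = w.v x := by
  rcases eq_or_ne y 0 with rfl | hy0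
  · exact ⟨by simpa using hx, by simp⟩
  have hvy : w.v x < w.v y := hy.resolve_left hy0
  have hne : x + y ≠ 0 := by
    intro h0
    have : y = -x := by linear_combination h0
    rw [this, w.v_neg] at hvy
    exact lt_irrefl _ hvy
  refine ⟨hne, ?_⟩
  have h1 : min (w.v x) (w.v y) ≤ w.v (x + y) := w.add_ge x y hx hy0 hne
  rw [min_eq_left hvy.le] at h1
  have h2 : min (w.v (x + y)) (w.v (-y)) ≤ w.v x := by
    have h3 := w.add_ge (x + y) (-y) hne (neg_ne_zero.mpr hy0) (by
      simpa [add_neg_cancel_right] using hx)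
    simpa [add_neg_cancel_right] using h3
  rw [w.v_neg] at h2
  by_contra hne2
  have h4 : w.v x < w.v (x + y) := lt_of_le_of_ne h1 (Ne.symm hne2)
  exact absurd h2 (not_le.mpr (lt_min h4 hvy))

end AddVal
namespace AddVal
variable (w : AddVal K)

lemma sum_bound {ι : Type*} {s : Finset ι} {f : ι → K} {B : ℚ}
    (h : ∀ i ∈ s, f i = 0 ∨ B ≤ w.v (f i)) :
    (∑ i ∈ s, f i) = 0 ∨ B ≤ w.v (∑ i ∈ s, f i) := by
  classical
  induction s using Finset.induction_on with
  | empty => simp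
  | insert _ _ hi ih =>
    rw [Finset.sum_insert hi]
    exact w.add_bound (h _ (Finset.mem_insert_self _ _))
      (ih fun i hi' => h i (Finset.mem_insert_of_mem hi'))

lemma sum_bound_lt {ι : Type*} {s : Finset ι} {f : ι → K} {B : ℚ}
    (h : ∀ i ∈ s, f i = 0 ∨ B < w.v (f i)) :
    (∑ i ∈ s, f i) = 0 ∨ B < w.v (∑ i ∈ s, f i) := by
  classical
  induction s using Finset.induction_on with
  | empty => simp
  | insert _ _ hi ih =>
    rw [Finset.sum_insert hi]
    exact w.add_bound_lt (h _ (Finset.mem_insert_self _ _))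
      (ih fun i hi' => h i (Finset.mem_insert_of_mem hi'))

lemma v_prod {ι : Type*} {s : Finset ι} {f : ι → K} (h : ∀ i ∈ s, f i ≠ 0) :
    w.v (∏ i ∈ s, f i) = ∑ i ∈ s, w.v (f i) := by
  classical
  induction s using Finset.induction_on with
  | empty => simp [w.map_one]
  | insert _ _ hi ih =>
    rename_i a s
    rw [Finset.prod_insert hi, Finset.sum_insert hi,
      w.map_mul _ _ (h _ (Finset.mem_insert_self _ _))
        (Finset.prod_ne_zero_iff.mpr fun i hi' => h i (Finset.mem_insert_of_mem hi')),
      ih fun i hi' => h i (Finset.mem_insert_of_mem hi')]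

lemma v_pow {x : K} (hx : x ≠ 0) (n : ℕ) : w.v (x ^ n) = n * w.v x := by
  induction n with
  | zero => simp [w.map_one]
  | succ n ih =>
    rw [pow_succ, w.map_mul _ _ (pow_ne_zero _ hx) hx, ih]
    push_cast; ring

lemma gauss_le {f : K[X]} (hf : f ≠ 0) {i : ℕ} (hi : f.coeff i ≠ 0) :
    w.gauss f ≤ w.v (f.coeff i) := by
  rw [gauss, dif_neg hf]
  exact Finset.inf'_le _ (by simpa [Polynomial.mem_support_iff] using hi)

end AddVal

/-- Gauss data: `m` is the largest index of a coefficient of (minimal) valuation `γ`. -/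
def GD (w : AddVal K) (f : K[X]) (γ : ℚ) (m : ℕ) : Prop :=
  f.coeff m ≠ 0 ∧ w.v (f.coeff m) = γ ∧ (∀ i, f.coeff i = 0 ∨ γ ≤ w.v (f.coeff i)) ∧
    ∀ i, m < i → f.coeff i = 0 ∨ γ < w.v (f.coeff i)

namespace GD
variable {w : AddVal K} {f g : K[X]} {γ γ₁ γ₂ : ℚ} {m m₁ m₂ : ℕ}

lemma ne_zero (h : GD w f γ m) : f ≠ 0 := fun h0 => h.1 (by simp [h0])

lemma gauss_eq (h : GD w f γ m) : w.gauss f = γ := by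
  obtain ⟨h0, h1, h2, h3⟩ := h
  have hf : f ≠ 0 := fun hf => h0 (by simp [hf])
  refine le_antisymm (h1 ▸ w.gauss_le hf h0) ?_
  rw [AddVal.gauss, dif_neg hf]
  refine Finset.le_inf' _ _ fun i hi => ?_
  rcases h2 i with h | h
  · exact absurd h (by simpa [Polynomial.mem_support_iff] using hi)
  · exact h

end GD

namespace AddVal

lemma exists_gd (w : AddVal K) {f : K[X]} (hf : f ≠ 0) : ∃ m, GD w f (w.gauss f) m := by
  classical
  set S := f.support.filter (fun i => w.v (f.coeff i) = w.gauss f) with hS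
  have hne : S.Nonempty := by
    obtain ⟨i, hi, hieq⟩ :=
      Finset.exists_mem_eq_inf' (Polynomial.support_nonempty.mpr hf) (fun i => w.v (f.coeff i))
    refine ⟨i, Finset.mem_filter.mpr ⟨hi, ?_⟩⟩
    rw [gauss, dif_neg hf, ← hieq]
  set M := S.max' hne with hM
  have hMS : M ∈ S := Finset.max'_mem _ _
  obtain ⟨hMsup, hMv⟩ := Finset.mem_filter.mp hMS
  refine ⟨M, by simpa [Polynomial.mem_support_iff] using hMsup, hMv, fun i => ?_, fun i hMi => ?_⟩
  · rcases eq_or_ne (f.coeff i) 0 with h | h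
    · exact Or.inl h
    · exact Or.inr (w.gauss_le hf h)
  · rcases eq_or_ne (f.coeff i) 0 with h | h
    · exact Or.inl h
    · refine Or.inr (lt_of_le_of_ne (w.gauss_le hf h) fun hc => ?_)
      have : i ∈ S := Finset.mem_filter.mpr ⟨by simpa [Polynomial.mem_support_iff] using h, hc.symm⟩
      exact absurd (Finset.le_max' _ _ this) (not_le.mpr hMi)

end AddVal
namespace GD
variable {w : AddVal K} {f g d : K[X]} {γ γ₁ γ₂ : ℚ} {m m₁ m₂ : ℕ}

lemma mul (hf : GD w f γ₁ m₁) (hg : GD w g γ₂ m₂) : GD w (f * g) (γ₁ + γ₂) (m₁ + m₂) := by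
  classical
  obtain ⟨hf0, hf1, hf2, hf3⟩ := hf
  obtain ⟨hg0, hg1, hg2, hg3⟩ := hg
  have term : ∀ a b : ℕ, f.coeff a * g.coeff b = 0 ∨ γ₁ + γ₂ ≤ w.v (f.coeff a * g.coeff b) := by
    intro a b
    rcases eq_or_ne (f.coeff a) 0 with h | ha
    · exact Or.inl (by simp [h])
    rcases eq_or_ne (g.coeff b) 0 with h | hb
    · exact Or.inl (by simp [h])
    exact Or.inr (by
      rw [w.map_mul _ _ ha hb]
      exact add_le_add ((hf2 a).resolve_left ha) ((hg2 b).resolve_left hb))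
  have termlt : ∀ a b : ℕ, (m₁ < a ∨ m₂ < b) →
      f.coeff a * g.coeff b = 0 ∨ γ₁ + γ₂ < w.v (f.coeff a * g.coeff b) := by
    intro a b hab
    rcases eq_or_ne (f.coeff a) 0 with h | ha
    · exact Or.inl (by simp [h])
    rcases eq_or_ne (g.coeff b) 0 with h | hb
    · exact Or.inl (by simp [h])
    refine Or.inr ?_
    rw [w.map_mul _ _ ha hb]
    rcases hab with hab | hab
    · have := (hf3 a hab).resolve_left ha
      exact add_lt_add_of_lt_of_le this ((hg2 b).resolve_left hb)
    · have := (hg3 b hab).resolve_left hb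
      exact add_lt_add_of_le_of_lt ((hf2 a).resolve_left ha) this
  have key : (f * g).coeff (m₁ + m₂) ≠ 0 ∧ w.v ((f * g).coeff (m₁ + m₂)) = γ₁ + γ₂ := by
    have hmem : (m₁, m₂) ∈ Finset.HasAntidiagonal.antidiagonal (m₁ + m₂) := by
      simp [Finset.HasAntidiagonal.mem_antidiagonal]
    have hsplit : (f * g).coeff (m₁ + m₂) = f.coeff m₁ * g.coeff m₂ +
        ∑ x ∈ (Finset.HasAntidiagonal.antidiagonal (m₁ + m₂)).erase (m₁, m₂), f.coeff x.1 * g.coeff x.2 := by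
      rw [Polynomial.coeff_mul, ← Finset.add_sum_erase _ _ hmem]
    have hx0 : f.coeff m₁ * g.coeff m₂ ≠ 0 := mul_ne_zero hf0 hg0
    have hvx : w.v (f.coeff m₁ * g.coeff m₂) = γ₁ + γ₂ := by
      rw [w.map_mul _ _ hf0 hg0, hf1, hg1]
    have hrest : (∑ x ∈ (Finset.HasAntidiagonal.antidiagonal (m₁ + m₂)).erase (m₁, m₂),
        f.coeff x.1 * g.coeff x.2) = 0 ∨ γ₁ + γ₂ <
        w.v (∑ x ∈ (Finset.HasAntidiagonal.antidiagonal (m₁ + m₂)).erase (m₁, m₂), f.coeff x.1 * g.coeff x.2) := by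
      refine w.sum_bound_lt fun x hx => ?_
      obtain ⟨hxne, hxmem⟩ := Finset.mem_erase.mp hx
      have hxsum : x.1 + x.2 = m₁ + m₂ := Finset.HasAntidiagonal.mem_antidiagonal.mp hxmem
      refine termlt x.1 x.2 ?_
      have hne' : x.1 ≠ m₁ ∨ x.2 ≠ m₂ := by
        by_contra hc
        push_neg at hc
        exact hxne (Prod.ext hc.1 hc.2)
      omega
    have := w.add_eq_of_lt hx0 (hrest.imp id fun hr => hvx ▸ hr)
    rw [← hsplit] at this
    exact ⟨this.1, this.2.trans hvx⟩
  refine ⟨key.1, key.2, fun i => ?_, fun i hi => ?_⟩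
  · rw [Polynomial.coeff_mul]
    exact w.sum_bound fun x _ => term x.1 x.2
  · rw [Polynomial.coeff_mul]
    refine w.sum_bound_lt fun x hx => ?_
    have hxsum : x.1 + x.2 = i := Finset.HasAntidiagonal.mem_antidiagonal.mp hx
    exact termlt x.1 x.2 (by omega)

lemma one : GD w 1 0 0 :=
  ⟨by simp, by simpa using w.map_one, fun i => by
      rcases eq_or_ne i 0 with rfl | hi
      · exact Or.inr (by simpa using w.map_one.ge)
      · exact Or.inl (by simp [Polynomial.coeff_one, hi]),
    fun i hi => Or.inl (by simp [Polynomial.coeff_one, hi.ne'])⟩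

lemma prod {ι : Type*} {s : Finset ι} {F : ι → K[X]} {γ : ι → ℚ} {m : ι → ℕ}
    (h : ∀ i ∈ s, GD w (F i) (γ i) (m i)) :
    GD w (∏ i ∈ s, F i) (∑ i ∈ s, γ i) (∑ i ∈ s, m i) := by
  classical
  induction s using Finset.induction_on with
  | empty => simpa using one
  | insert _ _ hi ih =>
    rw [Finset.prod_insert hi, Finset.sum_insert hi, Finset.sum_insert hi]
    exact (h _ (Finset.mem_insert_self _ _)).mul
      (ih fun i hi' => h i (Finset.mem_insert_of_mem hi'))

lemma pow (hf : GD w f γ m) (n : ℕ) : GD w (f ^ n) ((n : ℚ) * γ) (n * m) := by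
  have := prod (s := Finset.range n) (F := fun _ => f) (γ := fun _ => γ) (m := fun _ => m)
    (fun i _ => hf)
  simpa [Finset.prod_const, Finset.sum_const, Finset.card_range, nsmul_eq_mul, smul_eq_mul]
    using this

lemma neg (hf : GD w f γ m) : GD w (-f) γ m := by
  obtain ⟨h0, h1, h2, h3⟩ := hf
  refine ⟨by simpa using h0, by simpa [w.v_neg] using h1, fun i => ?_, fun i hi => ?_⟩
  · rcases h2 i with h | h
    · exact Or.inl (by simp [h])
    · exact Or.inr (by simpa [w.v_neg] using h)
  · rcases h3 i hi with h | h
    · exact Or.inl (by simp [h])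
    · exact Or.inr (by simpa [w.v_neg] using h)

lemma perturb (hf : GD w f γ m) (hd : ∀ i, d.coeff i = 0 ∨ γ < w.v (d.coeff i)) :
    GD w (f + d) γ m := by
  obtain ⟨h0, h1, h2, h3⟩ := hf
  have hm := w.add_eq_of_lt h0 ((hd m).imp id fun hr => h1 ▸ hr)
  refine ⟨by simpa using hm.1, by rw [Polynomial.coeff_add]; exact hm.2.trans h1,
    fun i => ?_, fun i hi => ?_⟩
  · rw [Polynomial.coeff_add]
    exact w.add_bound (h2 i) ((hd i).imp id le_of_lt)
  · rw [Polynomial.coeff_add]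
    exact w.add_bound_lt (h3 i hi) (hd i)

end GD
namespace AddVal
variable (w : AddVal K)

lemma v_sub_one_le {x : K} (hx : x ≠ 0) (hvx : w.v x = 0) {k : ℕ} (hxk : x ^ k ≠ 1) :
    w.v (x - 1) ≤ w.v (x ^ k - 1) := by
  have hx1 : x ≠ 1 := by rintro rfl; simp at hxk
  have hgeom : (∑ i ∈ Finset.range k, x ^ i) * (x - 1) = x ^ k - 1 := geom_sum_mul x k
  have hs : (∑ i ∈ Finset.range k, x ^ i) ≠ 0 := by
    intro h0
    rw [h0, zero_mul] at hgeom
    exact hxk (by linear_combination -hgeom)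
  have hvs : 0 ≤ w.v (∑ i ∈ Finset.range k, x ^ i) := by
    rcases w.sum_bound (B := 0) (f := fun i => x ^ i) (s := Finset.range k)
      (fun i _ => Or.inr (by rw [w.v_pow hx]; simp [hvx])) with h | h
    · exact absurd h hs
    · exact h
  calc w.v (x - 1) ≤ w.v (∑ i ∈ Finset.range k, x ^ i) + w.v (x - 1) :=
        le_add_of_nonneg_left hvs
    _ = w.v (x ^ k - 1) := by
        rw [← w.map_mul _ _ hs (sub_ne_zero.mpr hx1), hgeom]

end AddVal

section Zeta

variable {p : ℕ} {ζ : K}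

lemma zeta_ne_zero (hp : p.Prime) (hζ : IsPrimitiveRoot ζ p) : ζ ≠ 0 := by
  intro h0
  have := hζ.pow_eq_one
  rw [h0, zero_pow hp.ne_zero] at this
  exact zero_ne_one this

lemma v_zeta (w : AddVal K) (hp : p.Prime) (hζ : IsPrimitiveRoot ζ p) : w.v ζ = 0 := by
  have h1 := w.v_pow (zeta_ne_zero hp hζ) p
  rw [hζ.pow_eq_one, w.map_one] at h1
  have hp0 : (p : ℚ) ≠ 0 := Nat.cast_ne_zero.mpr hp.ne_zero
  field_simp at h1
  exact (mul_eq_zero.mp h1.symm).resolve_left hp0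

lemma v_zeta_pow (w : AddVal K) (hp : p.Prime) (hζ : IsPrimitiveRoot ζ p) (i : ℕ) :
    w.v (ζ ^ i) = 0 := by
  rw [w.v_pow (zeta_ne_zero hp hζ), v_zeta w hp hζ, mul_zero]

lemma zeta_pow_sub_one_ne (hp : p.Prime) (hζ : IsPrimitiveRoot ζ p) {j : ℕ} (hj0 : 0 < j)
    (hjp : j < p) : ζ ^ j - 1 ≠ 0 :=
  sub_ne_zero.mpr (hζ.pow_ne_one_of_pos_of_lt hj0.ne' hjp)

lemma v_zeta_pow_sub_one (w : AddVal K) (hp : p.Prime) (hζ : IsPrimitiveRoot ζ p) {j : ℕ}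
    (hj0 : 0 < j) (hjp : j < p) : w.v (ζ ^ j - 1) = w.v (ζ - 1) := by
  have hzne := zeta_ne_zero hp hζ
  have h1 : w.v (ζ - 1) ≤ w.v (ζ ^ j - 1) :=
    w.v_sub_one_le hzne (v_zeta w hp hζ) (hζ.pow_ne_one_of_pos_of_lt hj0.ne' hjp)
  have hcop : Nat.Coprime j p :=
    Nat.Coprime.symm (hp.coprime_iff_not_dvd.mpr (Nat.not_dvd_of_pos_of_lt hj0 hjp))
  obtain ⟨k, -, hk⟩ := Nat.exists_mul_mod_eq_one_of_coprime hcop hp.one_lt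
  have hpow : (ζ ^ j) ^ k = ζ := by
    rw [← pow_mul]
    conv_lhs => rw [← Nat.div_add_mod (j * k) p]
    rw [pow_add, pow_mul, hζ.pow_eq_one, one_pow, one_mul, hk, pow_one]
  have h2 : w.v (ζ ^ j - 1) ≤ w.v (ζ - 1) := by
    have := w.v_sub_one_le (pow_ne_zero j hzne) (v_zeta_pow w hp hζ j)
      (x := ζ ^ j) (k := k) (by rw [hpow]; exact hζ.ne_one hp.one_lt)
    rwa [hpow] at this
  exact le_antisymm h2 h1

lemma v_zeta_pow_sub_zeta_pow (w : AddVal K) (hp : p.Prime) (hζ : IsPrimitiveRoot ζ p)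
    {j k : ℕ} (hj : j < p) (hk : k < p) (hjk : j ≠ k) :
    ζ ^ j - ζ ^ k ≠ 0 ∧ w.v (ζ ^ j - ζ ^ k) = w.v (ζ - 1) := by
  have hzne := zeta_ne_zero hp hζ
  have main : ∀ a b : ℕ, b < a → a < p →
      ζ ^ a - ζ ^ b ≠ 0 ∧ w.v (ζ ^ a - ζ ^ b) = w.v (ζ - 1) := by
    intro a b hba hap
    have hfac : ζ ^ a - ζ ^ b = ζ ^ b * (ζ ^ (a - b) - 1) := by
      rw [mul_sub, mul_one, ← pow_add, Nat.add_sub_cancel' hba.le]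
    have h1 : ζ ^ (a - b) - 1 ≠ 0 := zeta_pow_sub_one_ne hp hζ (by omega) (by omega)
    have hne : ζ ^ a - ζ ^ b ≠ 0 := by
      rw [hfac]; exact mul_ne_zero (pow_ne_zero _ hzne) h1
    refine ⟨hne, ?_⟩
    rw [hfac, w.map_mul _ _ (pow_ne_zero _ hzne) h1, v_zeta_pow w hp hζ,
      v_zeta_pow_sub_one w hp hζ (by omega) (by omega), zero_add]
  rcases Nat.lt_or_ge k j with h | h
  · exact main j k h hj
  · have hkj : j < k := by omega
    obtain ⟨hne, hv⟩ := main k j hkj hk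
    refine ⟨fun h0 => hne (by linear_combination -h0), ?_⟩
    rw [show ζ ^ j - ζ ^ k = -(ζ ^ k - ζ ^ j) by ring, w.v_neg, hv]

end Zeta
section Factor

variable {p : ℕ} {ζ : K}

lemma natCast_eq_prod_one_sub (hp : p.Prime) (hζ : IsPrimitiveRoot ζ p) :
    (p : K) = ∏ j ∈ (Finset.range p).erase 0, (1 - ζ ^ j) := by
  have h1 : (X : K[X]) ^ p - 1 = ∏ j ∈ Finset.range p, (X - C (ζ ^ j)) := by
    simpa using X_pow_sub_C_eq_prod hζ hp.pos (one_pow p)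
  have h0 : (0 : ℕ) ∈ Finset.range p := Finset.mem_range.mpr hp.pos
  have h2 : (X : K[X]) ^ p - 1 =
      (X - 1) * ∏ j ∈ (Finset.range p).erase 0, (X - C (ζ ^ j)) := by
    rw [h1, ← Finset.mul_prod_erase _ _ h0]
    simp
  have h3 : (∑ i ∈ Finset.range p, (X : K[X]) ^ i) * (X - 1) =
      (∏ j ∈ (Finset.range p).erase 0, (X - C (ζ ^ j))) * (X - 1) := by
    rw [geom_sum_mul, h2, mul_comm]
  have hX1 : (X : K[X]) - 1 ≠ 0 := by
    have := Polynomial.X_sub_C_ne_zero (R := K) 1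
    simpa using this
  have h4 := mul_right_cancel₀ hX1 h3
  have h5 := congrArg (Polynomial.eval (1 : K)) h4
  simpa [Polynomial.eval_prod, Polynomial.eval_finset_sum] using h5

lemma pow_sub_pow_eq_prod [IsAlgClosed K] (hp : p.Prime) (hζ : IsPrimitiveRoot ζ p)
    (q₁ q : K[X]) :
    q₁ ^ p - q ^ p = ∏ j ∈ Finset.range p, (q₁ - C (ζ ^ j) * q) := by
  have key : ∀ a b : K, a ^ p - b ^ p = ∏ j ∈ Finset.range p, (a - ζ ^ j * b) := by
    intro a b
    have h1 := X_pow_sub_C_eq_prod hζ hp.pos (rfl : b ^ p = b ^ p)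
    have h2 := congrArg (Polynomial.eval a) h1
    simpa [Polynomial.eval_prod] using h2
  apply Polynomial.funext
  intro r
  simp only [Polynomial.eval_sub, Polynomial.eval_pow, Polynomial.eval_prod,
    Polynomial.eval_mul, Polynomial.eval_C]
  exact key (q₁.eval r) (q.eval r)

lemma v_natCast_eq (w : AddVal K) (hp : p.Prime) (hpK : (p : K) ≠ 0)
    (hζ : IsPrimitiveRoot ζ p) :
    w.v (p : K) = ((p : ℚ) - 1) * w.v (ζ - 1) := by
  have hprod := natCast_eq_prod_one_sub hp hζ
  have hfne : ∀ j ∈ (Finset.range p).erase 0, (1 : K) - ζ ^ j ≠ 0 := by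
    intro j hj
    obtain ⟨hj0, hjr⟩ := Finset.mem_erase.mp hj
    intro h0
    exact zeta_pow_sub_one_ne hp hζ (Nat.pos_of_ne_zero hj0) (Finset.mem_range.mp hjr)
      (by linear_combination -h0)
  have h1 : w.v (p : K) = ∑ j ∈ (Finset.range p).erase 0, w.v (1 - ζ ^ j) := by
    rw [hprod]; exact w.v_prod hfne
  have h2 : ∀ j ∈ (Finset.range p).erase 0, w.v (1 - ζ ^ j) = w.v (ζ - 1) := by
    intro j hj
    obtain ⟨hj0, hjr⟩ := Finset.mem_erase.mp hj
    rw [show (1 : K) - ζ ^ j = -(ζ ^ j - 1) by ring, w.v_neg,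
      v_zeta_pow_sub_one w hp hζ (Nat.pos_of_ne_zero hj0) (Finset.mem_range.mp hjr)]
  rw [h1, Finset.sum_congr rfl h2, Finset.sum_const,
    Finset.card_erase_of_mem (Finset.mem_range.mpr hp.pos), Finset.card_range, nsmul_eq_mul]
  push_cast [hp.one_lt.le]
  ring

lemma v_zeta_sub_one_nonneg (w : AddVal K) (hp : p.Prime) (hζ : IsPrimitiveRoot ζ p) :
    0 ≤ w.v (ζ - 1) := by
  have h1 : ζ - 1 ≠ 0 := sub_ne_zero.mpr (hζ.ne_one hp.one_lt)
  have := w.add_ge ζ (-1) (zeta_ne_zero hp hζ) (by norm_num) (by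
    rw [← sub_eq_add_neg]; exact h1)
  rw [← sub_eq_add_neg] at this
  rw [v_zeta w hp hζ, w.v_neg, w.map_one, min_self] at this
  exact this

end Factor
/-- Corollary 4.8: every total part-`p`-th-power decomposition
(`ρ` has no terms of degree divisible by `p`) is good. -/
theorem statement4 {K : Type*} [Field K] [IsAlgClosed K] (w : AddVal K) (p : ℕ)
    (hp : p.Prime) (hpK : (p : K) ≠ 0)
    (h q ρ : K[X]) (hh : h ≠ 0) (hd : IsPartDecomp p h q ρ)
    (htotal : ∀ i : ℕ, p ∣ i → ρ.coeff i = 0) :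
    IsGoodDecomp w p h q ρ := by
  classical
  refine ⟨hd, ?_⟩
  by_cases hbest : ∀ q₁ ρ₁ : K[X], IsPartDecomp p h q₁ ρ₁ → w.tdiff h ρ₁ ≤ w.tdiff h ρ
  · exact Or.inr hbest
  left
  push_neg at hbest
  obtain ⟨q₁, ρ₁, hd₁, hlt⟩ := hbest
  rcases eq_or_ne ρ 0 with rfl | hρ
  · rw [AddVal.tdiff, if_pos rfl] at hlt
    exact absurd hlt not_top_lt
  simp only [AddVal.tdiff, if_neg hρ] at hlt ⊢
  refine WithTop.coe_le_coe.mpr ?_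
  obtain ⟨δ, hδdef⟩ : ∃ δ : K[X], δ = q₁ ^ p - q ^ p := ⟨_, rfl⟩
  have hδρ : δ = ρ - ρ₁ := by
    rw [hδdef]
    linear_combination hd.1 - hd₁.1
  have hρ₁b : ∀ i, ρ₁.coeff i = 0 ∨ w.gauss ρ < w.v (ρ₁.coeff i) := by
    intro i
    rcases eq_or_ne ρ₁ 0 with rfl | hρ₁
    · exact Or.inl (by simp)
    simp only [AddVal.tdiff, if_neg hρ₁] at hlt
    have hgg : w.gauss ρ < w.gauss ρ₁ := by
      have := WithTop.coe_lt_coe.mp hlt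
      linarith
    rcases eq_or_ne (ρ₁.coeff i) 0 with h0 | h0
    · exact Or.inl h0
    · exact Or.inr (lt_of_lt_of_le hgg (w.gauss_le hρ₁ h0))
  have F1 : ∀ i, p ∣ i → δ.coeff i = 0 ∨ w.gauss ρ < w.v (δ.coeff i) := by
    intro i hdvd
    have hc : δ.coeff i = -ρ₁.coeff i := by
      rw [hδρ, Polynomial.coeff_sub, htotal i hdvd, zero_sub]
    rw [hc]
    rcases hρ₁b i with h0 | h0
    · exact Or.inl (by simp [h0])
    · exact Or.inr (by rwa [w.v_neg])
  have F2 : ∀ i, δ.coeff i = 0 ∨ w.gauss ρ ≤ w.v (δ.coeff i) := by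
    intro i
    rw [hδρ, Polynomial.coeff_sub, sub_eq_add_neg]
    refine w.add_bound ?_ ?_
    · rcases eq_or_ne (ρ.coeff i) 0 with h0 | h0
      · exact Or.inl h0
      · exact Or.inr (w.gauss_le hρ h0)
    · rcases hρ₁b i with h0 | h0
      · exact Or.inl (by simp [h0])
      · exact Or.inr (by rw [w.v_neg]; exact h0.le)
  obtain ⟨mρ, gdρ⟩ := w.exists_gd hρ
  have F3 : δ.coeff mρ ≠ 0 ∧ w.v (δ.coeff mρ) = w.gauss ρ := by
    have hc : δ.coeff mρ = ρ.coeff mρ + -(ρ₁.coeff mρ) := by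
      rw [hδρ, Polynomial.coeff_sub, sub_eq_add_neg]
    rw [hc]
    have hadd := w.add_eq_of_lt gdρ.1 (y := -(ρ₁.coeff mρ)) (by
      rcases hρ₁b mρ with h0 | h0
      · exact Or.inl (by simp [h0])
      · exact Or.inr (by rw [w.v_neg, gdρ.2.1]; exact h0))
    exact ⟨hadd.1, hadd.2.trans gdρ.2.1⟩
  have hδ0 : δ ≠ 0 := fun h0 => F3.1 (by simp [h0])
  have hΓeq : ∀ (Γ : ℚ) (N : ℕ), GD w δ Γ N → Γ = w.gauss ρ := by
    intro Γ N gdδ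
    have h1 : Γ ≤ w.v (δ.coeff mρ) := (gdδ.2.2.1 mρ).resolve_left F3.1
    rw [F3.2] at h1
    have h2 : w.gauss ρ ≤ w.v (δ.coeff N) := (F2 N).resolve_left gdδ.1
    rw [gdδ.2.1] at h2
    linarith
  have contra : ∀ (Γ : ℚ) (N : ℕ), GD w δ Γ N → p ∣ N → False := by
    intro Γ N gdδ hdvd
    rcases F1 N hdvd with h0 | h0
    · exact gdδ.1 h0
    · rw [gdδ.2.1, hΓeq Γ N gdδ] at h0
      exact lt_irrefl _ h0
  rcases eq_or_ne q 0 with rfl | hq0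
  · -- q = 0 : δ = q₁ ^ p
    have hq₁ : q₁ ≠ 0 := by
      intro h0
      exact hδ0 (by rw [hδdef, h0, sub_self])
    obtain ⟨m₁, gd₁⟩ := w.exists_gd hq₁
    have gdδ : GD w δ ((p : ℚ) * w.gauss q₁) (p * m₁) := by
      have hpw := gd₁.pow p
      have : δ = q₁ ^ p := by rw [hδdef, zero_pow hp.ne_zero, sub_zero]
      rwa [← this] at hpw
    exact (contra _ _ gdδ ⟨m₁, rfl⟩).elim
  rcases eq_or_ne q₁ 0 with rfl | hq₁0
  · -- q₁ = 0 : δ = -(q ^ p)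
    obtain ⟨mq, gdq⟩ := w.exists_gd hq0
    have gdδ : GD w δ ((p : ℚ) * w.gauss q) (p * mq) := by
      have hpw := (gdq.pow p).neg
      have : δ = -(q ^ p) := by rw [hδdef, zero_pow hp.ne_zero, zero_sub]
      rwa [← this] at hpw
    exact (contra _ _ gdδ ⟨mq, rfl⟩).elim
  -- main case
  haveI : NeZero (p : K) := ⟨hpK⟩
  obtain ⟨ζ, hζ⟩ := HasEnoughRootsOfUnity.exists_primitiveRoot K p
  set lam := w.v (ζ - 1) with hlam
  set c : ℚ := lam + w.gauss q with hcdef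
  obtain ⟨f, hfdef⟩ : ∃ f : ℕ → K[X], ∀ j, f j = q₁ - C (ζ ^ j) * q := ⟨_, fun _ => rfl⟩
  have hfact : δ = ∏ j ∈ Finset.range p, f j := by
    rw [hδdef, pow_sub_pow_eq_prod hp hζ q₁ q]
    exact Finset.prod_congr rfl fun j _ => (hfdef j).symm
  have hfne : ∀ j ∈ Finset.range p, f j ≠ 0 := by
    intro j hj h0
    exact hδ0 (by rw [hfact]; exact Finset.prod_eq_zero hj h0)
  have hMex : ∀ j : ℕ, ∃ m, j ∈ Finset.range p → GD w (f j) (w.gauss (f j)) m := by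
    intro j
    by_cases hj : j ∈ Finset.range p
    · exact (w.exists_gd (hfne j hj)).imp fun m hm _ => hm
    · exact ⟨0, fun hj' => absurd hj' hj⟩
  choose M hM using hMex
  have gdδ : GD w δ (∑ j ∈ Finset.range p, w.gauss (f j)) (∑ j ∈ Finset.range p, M j) := by
    rw [hfact]
    exact GD.prod fun j hj => hM j hj
  have hdiffb : ∀ j k : ℕ, j < p → k < p → j ≠ k → ∀ i : ℕ,
      (f j - f k).coeff i = 0 ∨ c ≤ w.v ((f j - f k).coeff i) := by
    intro j k hj hk hjk i
    have hfd : f j - f k = C (ζ ^ k - ζ ^ j) * q := by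
      rw [hfdef j, hfdef k, map_sub]
      ring
    rw [hfd, Polynomial.coeff_C_mul]
    rcases eq_or_ne (q.coeff i) 0 with h0 | h0
    · exact Or.inl (by simp [h0])
    obtain ⟨hzne, hzv⟩ := v_zeta_pow_sub_zeta_pow w hp hζ hk hj (Ne.symm hjk)
    refine Or.inr ?_
    rw [w.map_mul _ _ hzne h0, hzv, hcdef]
    exact add_le_add le_rfl (w.gauss_le hq0 h0)
  by_cases hA : ∃ j₀ ∈ Finset.range p, w.gauss (f j₀) < c
  · obtain ⟨j₀, hj₀, hj₀lt⟩ := hA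
    have gdall : ∀ j ∈ Finset.range p, GD w (f j) (w.gauss (f j₀)) (M j₀) := by
      intro j hj
      rcases eq_or_ne j j₀ with rfl | hne
      · exact hM j hj
      · have hpert := (hM j₀ hj₀).perturb (d := f j - f j₀) (fun i => by
          rcases hdiffb j j₀ (Finset.mem_range.mp hj) (Finset.mem_range.mp hj₀) hne i with
            h0 | h0
          · exact Or.inl h0
          · exact Or.inr (lt_of_lt_of_le hj₀lt h0))
        have heq : f j₀ + (f j - f j₀) = f j := by ring
        rwa [heq] at hpert
    have gdδ' : GD w δ (∑ j ∈ Finset.range p, w.gauss (f j₀)) (∑ j ∈ Finset.range p, M j₀) := by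
      rw [hfact]
      exact GD.prod gdall
    refine (contra _ _ gdδ' ⟨M j₀, ?_⟩).elim
    rw [Finset.sum_const, Finset.card_range, smul_eq_mul]
  · push_neg at hA
    have hsum : (∑ j ∈ Finset.range p, w.gauss (f j)) = w.gauss ρ := hΓeq _ _ gdδ
    have hge : (p : ℚ) * c ≤ w.gauss ρ := by
      rw [← hsum]
      calc (p : ℚ) * c = ∑ _j ∈ Finset.range p, c := by
            rw [Finset.sum_const, Finset.card_range, nsmul_eq_mul]
        _ ≤ ∑ j ∈ Finset.range p, w.gauss (f j) := Finset.sum_le_sum hA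
    obtain ⟨mq, gdq⟩ := w.exists_gd hq0
    have gdqp := gdq.pow p
    have hcoeffh : h.coeff (p * mq) = (q ^ p).coeff (p * mq) := by
      rw [hd.1, Polynomial.coeff_add, htotal (p * mq) ⟨mq, rfl⟩, add_zero]
    have hgh : w.gauss h ≤ (p : ℚ) * w.gauss q := by
      have h0 : h.coeff (p * mq) ≠ 0 := by rw [hcoeffh]; exact gdqp.1
      have hle := w.gauss_le hh h0
      rwa [hcoeffh, gdqp.2.1] at hle
    have hvp : w.v (p : K) = ((p : ℚ) - 1) * lam := v_natCast_eq w hp hpK hζ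
    rw [pBound, hvp]
    have hp1 : (1 : ℚ) < (p : ℚ) := by exact_mod_cast hp.one_lt
    have hne1 : (p : ℚ) - 1 ≠ 0 := by linarith
    have hrw : (p : ℚ) * (((p : ℚ) - 1) * lam) / ((p : ℚ) - 1) = (p : ℚ) * lam := by
      rw [show (p : ℚ) * (((p : ℚ) - 1) * lam) = ((p : ℚ) - 1) * ((p : ℚ) * lam) by ring]
      exact mul_div_cancel_left₀ _ hne1
    rw [hrw]
    have hcc : (p : ℚ) * c = (p : ℚ) * lam + (p : ℚ) * w.gauss q := by rw [hcdef]; ring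
    linarith
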